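/- Let A ∈ ℝ^{n×d} have a singular value decomposition A = U Σ Vᵀ, let j ≥ 1 be an integer with j ≤ d−1, let ε > 0, and set m = min{n, d, j + ⌈j/ε⌉ − 1}. Let S ∈ ℝ^{m×d} be the matrix consisting of the first m rows of Σ^(m)Vᵀ and let Δ = ‖A − A^(m)‖_F². Then for every j-dimensional linear subspace L of ℝ^d, dist²(A,L) ≤ Σ_{i=1}^m dist²(S_{i*},L) + Δ ≤ (1+ε) · dist²(A,L). -/

import Mathlib

open Matrix

/-- Identify a plain vector in `Fin d → ℝ` with a point of Euclidean space `ℝ^d`. -/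
noncomputable def toEuc {d : ℕ} (v : Fin d → ℝ) : EuclideanSpace ℝ (Fin d) :=
  (WithLp.equiv 2 (Fin d → ℝ)).symm v

/-- Squared Euclidean distance from a point (given as a row vector) to a set. -/
noncomputable def rowDistSq {d : ℕ} (p : Fin d → ℝ) (C : Set (EuclideanSpace ℝ (Fin d))) : ℝ :=
  (Metric.infDist (toEuc p) C) ^ 2

/-- `dist²(A, C)`: sum of squared Euclidean distances of the rows of `A` to the set `C`. -/
noncomputable def matDistSq {n d : ℕ} (A : Matrix (Fin n) (Fin d) ℝ)
    (C : Set (EuclideanSpace ℝ (Fin d))) : ℝ :=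
  ∑ i, rowDistSq (A i) C

/-- Squared Frobenius norm of a matrix. -/
noncomputable def frobSq {n d : ℕ} (A : Matrix (Fin n) (Fin d) ℝ) : ℝ :=
  ∑ i, ∑ j, (A i j) ^ 2

/-- The rectangular diagonal `n × d` matrix with diagonal entries `σ 0, σ 1, …`. -/
def svdDiag (n d : ℕ) (σ : ℕ → ℝ) : Matrix (Fin n) (Fin d) ℝ :=
  Matrix.of fun i j => if (i : ℕ) = (j : ℕ) then σ (i : ℕ) else 0

/-- The truncation keeping only the first `m` diagonal entries of `svdDiag n d σ`. -/
def svdDiagTrunc (n d m : ℕ) (σ : ℕ → ℝ) : Matrix (Fin n) (Fin d) ℝ :=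
  Matrix.of fun i j => if (i : ℕ) = (j : ℕ) ∧ (i : ℕ) < m then σ (i : ℕ) else 0

/-! ### Auxiliary lemmas -/

/-- The squared distance to a `j`-dimensional subspace is a quadratic form `p ⬝ᵥ B *ᵥ p`
for a matrix `B` (the matrix of the projection onto `Lᗮ`) which is dominated by the
identity and has trace `d - j`. -/
lemma exists_B {d j : ℕ} (L : Submodule ℝ (EuclideanSpace ℝ (Fin d)))
    (hL : Module.finrank ℝ L = j) (hjd : j ≤ d) :
    ∃ B : Matrix (Fin d) (Fin d) ℝ,
      (∀ p : Fin d → ℝ, rowDistSq p (L : Set (EuclideanSpace ℝ (Fin d))) = p ⬝ᵥ (B *ᵥ p)) ∧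
      (∀ p : Fin d → ℝ, p ⬝ᵥ (B *ᵥ p) ≤ p ⬝ᵥ p) ∧
      Matrix.trace B = (d : ℝ) - j := by
  classical
  set E := EuclideanSpace ℝ (Fin d)
  set Q : E →ₗ[ℝ] E := (Lᗮ).subtype ∘ₗ (Submodule.orthogonalProjectionOnto Lᗮ : E →L[ℝ] (Lᗮ)).toLinearMap
    with hQ
  have hQval : ∀ x : E, Q x = (Submodule.orthogonalProjectionOnto Lᗮ x : E) := fun x => rfl
  have hQsub : ∀ x : E, Q x = x - (Submodule.orthogonalProjectionOnto L x : E) := by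
    intro x
    rw [hQval]
    exact Submodule.starProjection_orthogonal_val x
  -- distance formula
  have hdist : ∀ x : E, Metric.infDist x (L : Set E) = ‖Q x‖ := by
    intro x
    rw [Metric.infDist_eq_iInf, hQsub, ← Submodule.starProjection_apply, Submodule.starProjection_minimal]
    exact iInf_congr fun y => dist_eq_norm _ _
  have hnorm_le : ∀ x : E, ‖Q x‖ ≤ ‖x‖ := by
    intro x
    rw [hQsub, ← Submodule.starProjection_apply, Submodule.starProjection_minimal]
    have := ciInf_le (f := fun y : L => ‖x - (y : E)‖)
      ⟨0, by rintro r ⟨y, rfl⟩; positivity⟩ (⟨0, L.zero_mem⟩ : L)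
    simpa using this
  set b := (EuclideanSpace.basisFun (Fin d) ℝ).toBasis with hb
  set B := LinearMap.toMatrix b b Q with hBdef
  have hrepr : ∀ x : E, ⇑(b.repr x) = (x : Fin d → ℝ) := fun x => rfl
  have hmul : ∀ p : Fin d → ℝ, B *ᵥ p = (Q (toEuc p) : Fin d → ℝ) := by
    intro p
    have := LinearMap.toMatrix_mulVec_repr b b Q (toEuc p)
    rwa [hrepr] at this
  -- quadratic form identity
  have hinner : ∀ x : E, (‖Q x‖ : ℝ)^2 = ∑ l, x l * (Q x) l := by
    intro x
    have h0 : (inner ℝ ((Submodule.orthogonalProjectionOnto L x : E)) (Q x) : ℝ) = 0 := by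
      have hmem : Q x ∈ Lᗮ := by rw [hQval]; exact (Submodule.orthogonalProjectionOnto Lᗮ x).2
      exact (Submodule.mem_orthogonal L (Q x)).mp hmem _ (Submodule.coe_mem _)
    have hsub : (inner ℝ (Q x - x) (Q x) : ℝ) = 0 := by
      have h1 : Q x - x = -((Submodule.orthogonalProjectionOnto L x : E)) := by rw [hQsub x]; abel
      rw [h1, inner_neg_left, h0, neg_zero]
    have h2 := inner_sub_left (𝕜 := ℝ) (Q x) x (Q x)
    have hsa : (inner ℝ (Q x) (Q x) : ℝ) = inner ℝ x (Q x) := by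
      rw [hsub] at h2; linarith
    calc (‖Q x‖ : ℝ)^2 = inner ℝ (Q x) (Q x) := (real_inner_self_eq_norm_sq _).symm
      _ = inner ℝ x (Q x) := hsa
      _ = ∑ l, x l * (Q x) l := by
          rw [PiLp.inner_apply]; simp [RCLike.inner_apply]
          exact Finset.sum_congr rfl fun _ _ => mul_comm _ _
  have hquad : ∀ p : Fin d → ℝ, p ⬝ᵥ (B *ᵥ p) = (‖Q (toEuc p)‖ : ℝ)^2 := by
    intro p
    rw [hmul, hinner, dotProduct]
    rfl
  refine ⟨B, ?_, ?_, ?_⟩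
  · intro p
    rw [rowDistSq, hdist, hquad]
  · intro p
    rw [hquad]
    have h3 : (‖toEuc p‖ : ℝ)^2 = p ⬝ᵥ p := by
      rw [← real_inner_self_eq_norm_sq, PiLp.inner_apply, dotProduct]
      simp [RCLike.inner_apply]
      simp [toEuc, sq]
    rw [← h3]
    have := hnorm_le (toEuc p)
    nlinarith [norm_nonneg (Q (toEuc p)), norm_nonneg (toEuc p)]
  · -- trace
    have hproj : LinearMap.IsProj (Lᗮ) Q := by
      constructor
      · intro x; rw [hQval]; exact (Submodule.orthogonalProjectionOnto Lᗮ x).2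
      · intro x hx; rw [hQval]; exact Submodule.starProjection_eq_self_iff.mpr hx
    have htr : LinearMap.trace ℝ E Q = (Module.finrank ℝ (Lᗮ) : ℝ) := hproj.trace
    have hmt := LinearMap.trace_eq_matrix_trace ℝ b Q
    have hrank : Module.finrank ℝ (Lᗮ) = d - j := by
      have := Submodule.finrank_add_finrank_orthogonal L
      rw [hL] at this
      have hd : Module.finrank ℝ (EuclideanSpace ℝ (Fin d)) = d := finrank_euclideanSpace_fin
      omega
    rw [← hBdef] at hmt
    rw [← hmt, htr, hrank, Nat.cast_sub hjd]

lemma trace_conj_left {n : ℕ} (U : Matrix (Fin n) (Fin n) ℝ) (hU : Uᵀ * U = 1)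
    (M : Matrix (Fin n) (Fin n) ℝ) : (U * M * Uᵀ).trace = M.trace := by
  rw [Matrix.trace_mul_comm, ← Matrix.mul_assoc, hU, Matrix.one_mul]

lemma quad_eq_diag {n d : ℕ} (A : Matrix (Fin n) (Fin d) ℝ) (B : Matrix (Fin d) (Fin d) ℝ)
    (i : Fin n) : (A i) ⬝ᵥ (B *ᵥ (A i)) = (A * B * Aᵀ) i i := by
  simp only [Matrix.mul_apply, dotProduct, Matrix.mulVec, Matrix.transpose_apply,
    Finset.sum_mul, Finset.mul_sum]
  rw [Finset.sum_comm]
  apply Finset.sum_congr rfl; intro l _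
  apply Finset.sum_congr rfl; intro k _
  ring

lemma quad_col {d : ℕ} (B V : Matrix (Fin d) (Fin d) ℝ) (c : Fin d) :
    (fun k => V k c) ⬝ᵥ (B *ᵥ (fun k => V k c)) = (Vᵀ * B * V) c c := by
  have := quad_eq_diag Vᵀ B c
  rw [Matrix.transpose_transpose] at this
  exact this

lemma frobSq_eq_trace {n d : ℕ} (M : Matrix (Fin n) (Fin d) ℝ) :
    frobSq M = (M * Mᵀ).trace := by
  unfold frobSq Matrix.trace
  apply Finset.sum_congr rfl; intro i _
  simp [Matrix.mul_apply, Matrix.diag, sq]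

lemma trace_svdDiag_conj {n d : ℕ} (σ : ℕ → ℝ) (W : Matrix (Fin d) (Fin d) ℝ) :
    (svdDiag n d σ * W * (svdDiag n d σ)ᵀ).trace
      = ∑ t ∈ Finset.range (min n d),
          σ t ^ 2 * (if h : t < d then W ⟨t, h⟩ ⟨t, h⟩ else 0) := by
  classical
  set D := svdDiag n d σ with hD
  have hrow : ∀ (i : Fin n) (l : Fin d),
      (D * W) i l = if h : (i:ℕ) < d then σ i * W ⟨(i:ℕ), h⟩ l else 0 := by
    intro i l
    rw [Matrix.mul_apply]
    by_cases h : (i:ℕ) < d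
    · rw [dif_pos h]
      rw [Finset.sum_eq_single (⟨(i:ℕ), h⟩ : Fin d)]
      · simp [hD, svdDiag]
      · intro k _ hk
        have : (i:ℕ) ≠ (k:ℕ) := fun he => hk (by ext; simp [← he])
        simp [hD, svdDiag, this]
      · simp
    · rw [dif_neg h]
      apply Finset.sum_eq_zero
      intro k _
      have : (i:ℕ) ≠ (k:ℕ) := by omega
      simp [hD, svdDiag, this]
  have hdiag : ∀ i : Fin n, (D * W * Dᵀ) i i
      = if h : (i:ℕ) < d then σ i ^ 2 * W ⟨(i:ℕ), h⟩ ⟨(i:ℕ), h⟩ else 0 := by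
    intro i
    rw [Matrix.mul_apply]
    by_cases h : (i:ℕ) < d
    · rw [dif_pos h]
      rw [Finset.sum_eq_single (⟨(i:ℕ), h⟩ : Fin d)]
      · rw [hrow, dif_pos h]
        simp [hD, svdDiag]
        ring
      · intro k _ hk
        have : (i:ℕ) ≠ (k:ℕ) := fun he => hk (by ext; simp [← he])
        simp [hD, svdDiag, this]
      · simp
    · rw [dif_neg h]
      apply Finset.sum_eq_zero
      intro k _
      have : (i:ℕ) ≠ (k:ℕ) := by omega
      simp [hD, svdDiag, this]
  unfold Matrix.trace
  have h1 : ∑ i : Fin n, (D * W * Dᵀ).diag i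
      = ∑ t ∈ Finset.range n, (if h : t < d then σ t ^ 2 * W ⟨t, h⟩ ⟨t, h⟩ else 0) := by
    rw [← Fin.sum_univ_eq_sum_range]
    apply Finset.sum_congr rfl; intro i _
    exact hdiag i
  rw [h1]
  rw [← Finset.sum_subset (Finset.range_subset_range.mpr (min_le_left n d))]
  · apply Finset.sum_congr rfl; intro t ht
    have htd : t < d := lt_of_lt_of_le (Finset.mem_range.mp ht) (min_le_right n d)
    rw [dif_pos htd, dif_pos htd]
  · intro t _ ht
    have : ¬ t < d := by
      simp only [Finset.mem_range] at *
      omega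
    rw [dif_neg this]

lemma frobSq_conj {n d : ℕ} (U : Matrix (Fin n) (Fin n) ℝ) (V : Matrix (Fin d) (Fin d) ℝ)
    (hU : Uᵀ * U = 1) (hV : Vᵀ * V = 1) (M : Matrix (Fin n) (Fin d) ℝ) :
    frobSq (U * M * Vᵀ) = frobSq M := by
  rw [frobSq_eq_trace, frobSq_eq_trace]
  have h : (U * M * Vᵀ) * (U * M * Vᵀ)ᵀ = U * (M * Mᵀ) * Uᵀ := by
    simp only [Matrix.transpose_mul, Matrix.transpose_transpose, Matrix.mul_assoc]
    rw [← Matrix.mul_assoc Vᵀ V, hV, Matrix.one_mul]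
  rw [h, trace_conj_left U hU]

lemma frobSq_diag_sub {n d m : ℕ} (σ : ℕ → ℝ) :
    frobSq (svdDiag n d σ - svdDiagTrunc n d m σ)
      = ∑ t ∈ Finset.Ico m (min n d), σ t ^ 2 := by
  classical
  have hent : ∀ (i : Fin n) (k : Fin d),
      (svdDiag n d σ - svdDiagTrunc n d m σ) i k
        = if (i:ℕ) = (k:ℕ) ∧ ¬ (i:ℕ) < m then σ i else 0 := by
    intro i k
    simp only [Matrix.sub_apply, svdDiag, svdDiagTrunc, Matrix.of_apply]
    split_ifs <;> first | (exfalso; omega) | ring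
  have hrow : ∀ i : Fin n, (∑ k, ((svdDiag n d σ - svdDiagTrunc n d m σ) i k)^2)
      = if (i:ℕ) < d ∧ ¬ (i:ℕ) < m then σ i ^ 2 else 0 := by
    intro i
    by_cases h : (i:ℕ) < d
    · rw [Finset.sum_eq_single (⟨(i:ℕ), h⟩ : Fin d)]
      · rw [hent]
        by_cases h2 : (i:ℕ) < m <;> simp [h, h2]
      · intro k _ hk
        have hne : (i:ℕ) ≠ (k:ℕ) := fun he => hk (by ext; simp [← he])
        rw [hent]
        simp [hne]
      · simp
    · have : ¬ ((i:ℕ) < d ∧ ¬ (i:ℕ) < m) := by tauto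
      rw [if_neg this]
      apply Finset.sum_eq_zero
      intro k _
      have hne : (i:ℕ) ≠ (k:ℕ) := by omega
      rw [hent]
      simp [hne]
  unfold frobSq
  have h1 : ∑ i : Fin n, ∑ k, ((svdDiag n d σ - svdDiagTrunc n d m σ) i k)^2
      = ∑ t ∈ Finset.range n, (if t < d ∧ ¬ t < m then σ t ^ 2 else 0) := by
    rw [← Fin.sum_univ_eq_sum_range]
    apply Finset.sum_congr rfl; intro i _
    exact hrow i
  rw [h1]
  have hsub : Finset.Ico m (min n d) ⊆ Finset.range n := by
    intro t ht
    simp only [Finset.mem_Ico, Finset.mem_range] at *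
    omega
  rw [← Finset.sum_subset hsub]
  · apply Finset.sum_congr rfl; intro t ht
    simp only [Finset.mem_Ico] at ht
    have : t < d ∧ ¬ t < m := by omega
    rw [if_pos this]
  · intro t ht1 ht2
    simp only [Finset.mem_range] at ht1
    simp only [Finset.mem_Ico] at ht2
    have : ¬ (t < d ∧ ¬ t < m) := by omega
    rw [if_neg this]

set_option maxHeartbeats 1600000 in
/-- coreset for the linear `j`-subspace problem:
with `A = U Σ Vᵀ` an SVD, `1 ≤ j ≤ d-1`, `ε > 0`, `m = min{n, d, j + ⌈j/ε⌉ - 1}`,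
`S` the matrix of the first `m` rows of `Σ^(m)Vᵀ` and `Δ = ‖A - A^(m)‖_F²`,
for every `j`-dimensional linear subspace `L` of `ℝ^d`:
`dist²(A,L) ≤ Σᵢ dist²(S_{i*},L) + Δ ≤ (1+ε)·dist²(A,L)`. -/
theorem stmt4 {n d j : ℕ} (A : Matrix (Fin n) (Fin d) ℝ)
    (U : Matrix (Fin n) (Fin n) ℝ) (V : Matrix (Fin d) (Fin d) ℝ) (σ : ℕ → ℝ)
    (hU : Uᵀ * U = 1) (hV : Vᵀ * V = 1)
    (hσ0 : ∀ i, i < min n d → 0 ≤ σ i)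
    (hσa : ∀ i i', i ≤ i' → i' < min n d → σ i' ≤ σ i)
    (hA : A = U * svdDiag n d σ * Vᵀ)
    (ε : ℝ) (hε : 0 < ε) (hj1 : 1 ≤ j) (hj2 : j < d)
    (m : ℕ) (hm : m = min n (min d (j + ⌈(j : ℝ) / ε⌉₊ - 1)))
    (S : Matrix (Fin m) (Fin d) ℝ)
    (hS : ∀ (i : Fin m) (l : Fin d),
      S i l = (svdDiagTrunc n d m σ * Vᵀ) (Fin.castLE (hm.le.trans (min_le_left _ _)) i) l) :
    ∀ L : Submodule ℝ (EuclideanSpace ℝ (Fin d)), Module.finrank ℝ L = j →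
      matDistSq A (L : Set (EuclideanSpace ℝ (Fin d))) ≤
          matDistSq S (L : Set (EuclideanSpace ℝ (Fin d))) +
            frobSq (A - U * svdDiagTrunc n d m σ * Vᵀ) ∧
        matDistSq S (L : Set (EuclideanSpace ℝ (Fin d))) +
            frobSq (A - U * svdDiagTrunc n d m σ * Vᵀ) ≤
          (1 + ε) * matDistSq A (L : Set (EuclideanSpace ℝ (Fin d))) := by
  classical
  intro L hL
  obtain ⟨B, hB1, hB2, hB3⟩ := exists_B L hL hj2.le
  set W := Vᵀ * B * V with hWdef
  set μ := min n d with hμ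
  have hc1 : 1 ≤ ⌈(j : ℝ) / ε⌉₊ := by
    rw [Nat.one_le_ceil_iff]
    positivity
  have hmn : m ≤ n := by omega
  have hmd : m ≤ d := by omega
  have hmμ : m ≤ μ := by omega
  set w : ℕ → ℝ := fun t => if h : t < d then W ⟨t, h⟩ ⟨t, h⟩ else 0 with hw
  -- basic facts about w
  have hwq : ∀ (t : ℕ) (h : t < d),
      w t = (fun k => V k ⟨t, h⟩) ⬝ᵥ (B *ᵥ (fun k => V k ⟨t, h⟩)) := by
    intro t h
    rw [hw]
    simp only [dif_pos h]
    rw [quad_col]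
  have hw0 : ∀ t, 0 ≤ w t := by
    intro t
    by_cases h : t < d
    · rw [hwq t h, ← hB1]
      exact sq_nonneg _
    · simp [hw, h]
  have hw1 : ∀ t, w t ≤ 1 := by
    intro t
    by_cases h : t < d
    · rw [hwq t h]
      have h2 := hB2 (fun k => V k ⟨t, h⟩)
      refine h2.trans ?_
      have : (fun k => V k ⟨t, h⟩) ⬝ᵥ (fun k => V k ⟨t, h⟩) = (Vᵀ * V) ⟨t, h⟩ ⟨t, h⟩ := by
        simp [Matrix.mul_apply, dotProduct]
      rw [this, hV, Matrix.one_apply_eq]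
    · simp [hw, h]
  have hwsum : ∑ t ∈ Finset.range d, w t = (d : ℝ) - j := by
    have h1 : ∑ t ∈ Finset.range d, w t = ∑ i : Fin d, W i i := by
      rw [← Fin.sum_univ_eq_sum_range (fun t => w t) d]
      apply Finset.sum_congr rfl; intro i _
      rw [hw]
      simp only [dif_pos i.2]
    have h2 : Matrix.trace W = Matrix.trace B := by
      rw [hWdef, Matrix.trace_mul_comm, ← Matrix.mul_assoc,
        mul_eq_one_comm.mp hV, Matrix.one_mul]
    have h3 : ∑ i : Fin d, W i i = Matrix.trace W := rfl
    rw [h1, h3, h2, hB3]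
  -- matDistSq A
  have hAd : matDistSq A (L : Set (EuclideanSpace ℝ (Fin d)))
      = ∑ t ∈ Finset.range μ, σ t ^ 2 * w t := by
    unfold matDistSq
    have h1 : ∀ i : Fin n, rowDistSq (A i) (L : Set (EuclideanSpace ℝ (Fin d)))
        = (A * B * Aᵀ) i i := fun i => (hB1 _).trans (quad_eq_diag A B i)
    rw [Finset.sum_congr rfl (fun i _ => h1 i)]
    have h2 : A * B * Aᵀ = U * (svdDiag n d σ * W * (svdDiag n d σ)ᵀ) * Uᵀ := by
      rw [hA, hWdef]
      simp only [Matrix.transpose_mul, Matrix.transpose_transpose, Matrix.mul_assoc]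
    have h3 : ∑ i : Fin n, (A * B * Aᵀ) i i = (A * B * Aᵀ).trace := rfl
    rw [h3, h2, trace_conj_left U hU, trace_svdDiag_conj]
  -- matDistSq S
  have hSrow : ∀ i : Fin m, S i
      = (σ (i : ℕ)) • (fun l => V l ⟨(i : ℕ), lt_of_lt_of_le i.2 hmd⟩) := by
    intro i
    funext l
    rw [hS i l, Matrix.mul_apply]
    rw [Finset.sum_eq_single (⟨(i : ℕ), lt_of_lt_of_le i.2 hmd⟩ : Fin d)]
    · simp [svdDiagTrunc, i.2]
    · intro k _ hk
      have hne : ((i : ℕ) : ℕ) ≠ (k : ℕ) := fun he => hk (by ext; simp [← he])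
      simp [svdDiagTrunc, hne]
    · simp
  have hSd : matDistSq S (L : Set (EuclideanSpace ℝ (Fin d)))
      = ∑ t ∈ Finset.range m, σ t ^ 2 * w t := by
    unfold matDistSq
    rw [← Fin.sum_univ_eq_sum_range (fun t => σ t ^ 2 * w t) m]
    apply Finset.sum_congr rfl; intro i _
    have hid : (i : ℕ) < d := lt_of_lt_of_le i.2 hmd
    rw [hB1, hSrow i, smul_dotProduct, Matrix.mulVec_smul, dotProduct_smul,
      hwq (i : ℕ) hid]
    simp [smul_eq_mul, sq]
    ring
  -- frobSq
  have hΔ : frobSq (A - U * svdDiagTrunc n d m σ * Vᵀ) = ∑ t ∈ Finset.Ico m μ, σ t ^ 2 := by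
    have h1 : A - U * svdDiagTrunc n d m σ * Vᵀ
        = U * (svdDiag n d σ - svdDiagTrunc n d m σ) * Vᵀ := by
      rw [hA, ← Matrix.sub_mul, ← Matrix.mul_sub]
    rw [h1, frobSq_conj U V hU hV, frobSq_diag_sub]
  -- sums
  set SS := ∑ t ∈ Finset.range m, σ t ^ 2 * w t with hSS
  set SI := ∑ t ∈ Finset.Ico m μ, σ t ^ 2 * w t with hSI
  set SD := ∑ t ∈ Finset.Ico m μ, σ t ^ 2 with hSD
  have hsplit : ∑ t ∈ Finset.range μ, σ t ^ 2 * w t = SS + SI := by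
    rw [hSS, hSI, Finset.range_eq_Ico, Finset.range_eq_Ico]
    exact (Finset.sum_Ico_consecutive _ (Nat.zero_le m) hmμ).symm
  have hSS0 : 0 ≤ SS :=
    Finset.sum_nonneg fun t _ => mul_nonneg (sq_nonneg _) (hw0 t)
  have hSI0 : 0 ≤ SI :=
    Finset.sum_nonneg fun t _ => mul_nonneg (sq_nonneg _) (hw0 t)
  have hSIle : SI ≤ SD := by
    apply Finset.sum_le_sum
    intro t _
    calc σ t ^ 2 * w t ≤ σ t ^ 2 * 1 :=
          mul_le_mul_of_nonneg_left (hw1 t) (sq_nonneg _)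
      _ = σ t ^ 2 := mul_one _
  -- key inequality : SD - SI ≤ ε * (SS + SI)
  have hkey : SD - SI ≤ ε * (SS + SI) := by
    rcases eq_or_lt_of_le hmμ with heq | hlt
    · have : Finset.Ico m μ = ∅ := by rw [← heq]; exact Finset.Ico_self m
      rw [hSD, hSI, this]
      simp
      positivity
    · -- m < μ, so m = j + ⌈j/ε⌉ - 1
      have hme : m = j + ⌈(j : ℝ) / ε⌉₊ - 1 := by omega
      have hjm : j ≤ m := by omega
      have hcm : ⌈(j : ℝ) / ε⌉₊ ≤ m := by omega
      have hεm : (j : ℝ) ≤ ε * m := by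
        have h1 : (j : ℝ) / ε ≤ ⌈(j : ℝ) / ε⌉₊ := Nat.le_ceil _
        have h2 : ((⌈(j : ℝ) / ε⌉₊ : ℝ)) ≤ (m : ℝ) := Nat.cast_le.mpr hcm
        rw [div_le_iff₀ hε] at h1
        calc (j : ℝ) ≤ (⌈(j : ℝ) / ε⌉₊ : ℝ) * ε := h1
          _ ≤ (m : ℝ) * ε := mul_le_mul_of_nonneg_right h2 hε.le
          _ = ε * m := mul_comm _ _
      set t₀ := ∑ t ∈ Finset.range m, (1 - w t) with ht₀
      have ht00 : 0 ≤ t₀ :=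
        Finset.sum_nonneg fun t _ => by linarith [hw1 t]
      have hwm : ∑ t ∈ Finset.range m, w t = (m : ℝ) - t₀ := by
        rw [ht₀, Finset.sum_sub_distrib, Finset.sum_const, Finset.card_range,
          nsmul_eq_mul, mul_one]
        ring
      have hIcoD : ∑ t ∈ Finset.Ico m d, (1 - w t) = (j : ℝ) - t₀ := by
        have hsum : t₀ + ∑ t ∈ Finset.Ico m d, (1 - w t)
            = ∑ t ∈ Finset.range d, (1 - w t) := by
          rw [ht₀, Finset.range_eq_Ico, Finset.range_eq_Ico]
          exact Finset.sum_Ico_consecutive _ (Nat.zero_le m) hmd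
        have hd : ∑ t ∈ Finset.range d, (1 - w t) = (j : ℝ) := by
          rw [Finset.sum_sub_distrib, Finset.sum_const, Finset.card_range,
            nsmul_eq_mul, mul_one, hwsum]
          ring
        linarith
      have ht0j : t₀ ≤ (j : ℝ) := by
        have : 0 ≤ ∑ t ∈ Finset.Ico m d, (1 - w t) :=
          Finset.sum_nonneg fun t _ => by linarith [hw1 t]
        linarith
      set s := σ m with hs
      have hs0 : 0 ≤ s := hσ0 m hlt
      -- step 1 : SD - SI ≤ s^2 * (j - t₀)
      have hstep1 : SD - SI ≤ s ^ 2 * ((j : ℝ) - t₀) := by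
        have h1 : SD - SI = ∑ t ∈ Finset.Ico m μ, σ t ^ 2 * (1 - w t) := by
          rw [hSD, hSI, ← Finset.sum_sub_distrib]
          apply Finset.sum_congr rfl; intro t _; ring
        have h2 : ∑ t ∈ Finset.Ico m μ, σ t ^ 2 * (1 - w t)
            ≤ ∑ t ∈ Finset.Ico m μ, s ^ 2 * (1 - w t) := by
          apply Finset.sum_le_sum
          intro t ht
          simp only [Finset.mem_Ico] at ht
          have hσle : σ t ≤ s := hσa m t ht.1 ht.2
          have hσ0t : 0 ≤ σ t := hσ0 t ht.2
          have : σ t ^ 2 ≤ s ^ 2 := by nlinarith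
          have h1w : (0 : ℝ) ≤ 1 - w t := by linarith [hw1 t]
          exact mul_le_mul_of_nonneg_right this h1w
        have h3 : ∑ t ∈ Finset.Ico m μ, s ^ 2 * (1 - w t)
            ≤ ∑ t ∈ Finset.Ico m d, s ^ 2 * (1 - w t) := by
          apply Finset.sum_le_sum_of_subset_of_nonneg
          · apply Finset.Ico_subset_Ico le_rfl
            omega
          · intro t _ _
            have h1w : (0 : ℝ) ≤ 1 - w t := by linarith [hw1 t]
            positivity
        have h4 : ∑ t ∈ Finset.Ico m d, s ^ 2 * (1 - w t) = s ^ 2 * ((j : ℝ) - t₀) := by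
          rw [← Finset.mul_sum, hIcoD]
        linarith
      -- step 2 : s^2 * (m - t₀) ≤ SS + SI
      have hstep2 : s ^ 2 * ((m : ℝ) - t₀) ≤ SS + SI := by
        have h1 : ∑ t ∈ Finset.range m, s ^ 2 * w t ≤ SS := by
          apply Finset.sum_le_sum
          intro t ht
          simp only [Finset.mem_range] at ht
          have hσge : s ≤ σ t := hσa t m ht.le hlt
          have : s ^ 2 ≤ σ t ^ 2 := by nlinarith
          exact mul_le_mul_of_nonneg_right this (hw0 t)
        have h2 : ∑ t ∈ Finset.range m, s ^ 2 * w t = s ^ 2 * ((m : ℝ) - t₀) := by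
          rw [← Finset.mul_sum, hwm]
        linarith
      -- scalar inequality
      have hscal : (j : ℝ) - t₀ ≤ ε * ((m : ℝ) - t₀) := by
        have hjmR : (j : ℝ) ≤ (m : ℝ) := Nat.cast_le.mpr hjm
        rcases le_total ε 1 with h1 | h1
        · nlinarith [mul_nonneg ht00 (sub_nonneg.2 h1)]
        · nlinarith [mul_le_mul_of_nonneg_right ht0j (sub_nonneg.2 h1),
            mul_nonneg hε.le (sub_nonneg.2 hjmR)]
      calc SD - SI ≤ s ^ 2 * ((j : ℝ) - t₀) := hstep1
        _ ≤ s ^ 2 * (ε * ((m : ℝ) - t₀)) :=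
            mul_le_mul_of_nonneg_left hscal (sq_nonneg _)
        _ = ε * (s ^ 2 * ((m : ℝ) - t₀)) := by ring
        _ ≤ ε * (SS + SI) := mul_le_mul_of_nonneg_left hstep2 hε.le
  constructor
  · rw [hAd, hSd, hΔ, hsplit]
    linarith
  · rw [hAd, hSd, hΔ, hsplit]
    nlinarith
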